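/- Under the standing hypotheses, the commutator of R^β in R is the internal direct sum of the C(R)-submodules J_g: V_R(R^β) = ⊕_{g∈G} J_g. -/

import Mathlib

open scoped BigOperators

attribute [local instance] Classical.propDecidable

universe u v w

/-- A groupoid in the sense of Lawson: a (nonempty) set `G` with a partially defined
binary operation (here totalized: `mul g h` is only meaningful when `d g = r h`),
inverses, and one-sided identities `r g = g * g⁻¹` and `d g = g⁻¹ * g`. -/
structure Gpd (G : Type*) where
  d : G → G
  r : G → G
  mul : G → G → G
  inv : G → G
  assoc : ∀ g h l, d g = r h → d h = r l → mul (mul g h) l = mul g (mul h l)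
  d_mul : ∀ g h, d g = r h → d (mul g h) = d h
  r_mul : ∀ g h, d g = r h → r (mul g h) = r g
  d_inv : ∀ g, d (inv g) = r g
  r_inv : ∀ g, r (inv g) = d g
  inv_inv : ∀ g, inv (inv g) = g
  mul_inv : ∀ g, mul g (inv g) = r g
  inv_mul : ∀ g, mul (inv g) g = d g
  mul_d : ∀ g, mul g (d g) = g
  r_mul_self : ∀ g, mul (r g) g = g
  d_d : ∀ g, d (d g) = d g
  r_d : ∀ g, r (d g) = d g
  inv_d : ∀ g, inv (d g) = d g

namespace Gpd

variable {G : Type*} (gpd : Gpd G)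

/-- The set `G₀` of identities of the groupoid. -/
def idts : Set G := Set.range gpd.d

/-- `H` is a subgroupoid: a nonempty subset closed under inverses and under all
defined products. -/
def IsSubgpd (H : Set G) : Prop :=
  H.Nonempty ∧ (∀ g ∈ H, gpd.inv g ∈ H) ∧
    ∀ g ∈ H, ∀ h ∈ H, gpd.d g = gpd.r h → gpd.mul g h ∈ H

/-- A wide subgroupoid: a subgroupoid containing all the identities of `G`. -/
def IsWide (H : Set G) : Prop := gpd.IsSubgpd H ∧ gpd.idts ⊆ H

/-- The subgroupoid generated by a subset `X` of `G`: the intersection of all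
subgroupoids containing `X`. -/
def gen (X : Set G) : Set G := ⋂₀ {H : Set G | gpd.IsSubgpd H ∧ X ⊆ H}

end Gpd

/-- A unital action `β` of a groupoid `gpd` on a `K`-algebra `R`.  Each ideal
`E_g = E_{r g}` is the unital ideal `R·(one g)` generated by the central idempotent
`one g` (the identity element `1_g` of `E_g`), and `act g` encodes the `K`-algebra
isomorphism `β_g : E_{g⁻¹} → E_g` (only the values `act g (x * one (inv g))` on
`E_{g⁻¹}` are relevant). -/
structure GpdAct (K : Type*) [CommRing K] (R : Type*) [Ring R] [Algebra K R]
    {G : Type*} (gpd : Gpd G) where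
  one : G → R
  one_central : ∀ g x, one g * x = x * one g
  one_idem : ∀ g, one g * one g = one g
  one_r : ∀ g, one g = one (gpd.r g)
  act : G → R → R
  act_mem : ∀ g x, act g (x * one (gpd.inv g)) * one g = act g (x * one (gpd.inv g))
  act_add : ∀ g x y, act g ((x + y) * one (gpd.inv g)) =
      act g (x * one (gpd.inv g)) + act g (y * one (gpd.inv g))
  act_mul : ∀ g x y, act g (x * y * one (gpd.inv g)) =
      act g (x * one (gpd.inv g)) * act g (y * one (gpd.inv g))
  act_smul : ∀ g (k : K) (x : R),
      act g (k • x * one (gpd.inv g)) = k • act g (x * one (gpd.inv g))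
  act_unit : ∀ g, act g (one (gpd.inv g)) = one g
  act_id : ∀ g x, act (gpd.d g) (x * one (gpd.d g)) = x * one (gpd.d g)
  act_comp : ∀ g h x, gpd.d g = gpd.r h →
      act g (act h (x * one (gpd.inv h)) * one (gpd.inv g)) =
        act (gpd.mul g h) (x * one (gpd.inv h))

section Defs

variable {K : Type*} [CommRing K] {R : Type*} [Ring R] [Algebra K R]
  {G : Type*} (gpd : Gpd G) (β : GpdAct K R gpd)

/-- The invariants `R^{β_H}` of `R` under the restriction of the action to a
subset `H` of `G`: all `x` with `β_h(x 1_{h⁻¹}) = x 1_h` for all `h ∈ H`. -/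
def fixedSet (H : Set G) : Set R :=
  {x : R | ∀ h ∈ H, β.act h (x * β.one (gpd.inv h)) = x * β.one h}

/-- `J_g = {t ∈ E_g | t β_g(x 1_{g⁻¹}) = x t for all x ∈ R}`. -/
def Jset (g : G) : Set R :=
  {t : R | t * β.one g = t ∧ ∀ x : R, t * β.act g (x * β.one (gpd.inv g)) = x * t}

/-- `H_S = {g ∈ G | β_g(s 1_{g⁻¹}) = s 1_g for all s ∈ S}`. -/
def Hset (S : Set R) : Set G :=
  {g : G | ∀ s ∈ S, β.act g (s * β.one (gpd.inv g)) = s * β.one g}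

/-- `R = ⊕_{e ∈ G₀} E_e`, i.e. the identity elements of the ideals `E_e`, `e ∈ G₀`,
are pairwise orthogonal central idempotents summing to `1`. -/
def IsDecomp [Fintype G] : Prop :=
  (∑ e : G, if e ∈ gpd.idts then β.one e else 0) = 1 ∧
    ∀ e f : G, e ∈ gpd.idts → f ∈ gpd.idts → e ≠ f → β.one e * β.one f = 0

/-- `R` is a `β`-Galois extension of `R^β`: there is a Galois coordinate system
`x_i, y_i` with `Σ_i x_i β_g(y_i 1_{g⁻¹}) = δ_{e,g} 1_e` for all `e ∈ G₀`, `g ∈ G`. -/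
def IsGaloisExt [Fintype G] : Prop :=
  ∃ (n : ℕ) (x y : Fin n → R), ∀ g : G,
    (∑ i, x i * β.act g (y i * β.one (gpd.inv g))) = if g ∈ gpd.idts then β.one g else 0

/-- `V = ⊕_{g ∈ H} J_g`: every family `(f g)_{g ∈ H}` with `f g ∈ J_g` sums into `V`,
and every element of `V` is in a unique way such a sum (internal direct sum). -/
def IsDirectSumOver [Fintype G] (H : Set G) (V : Set R) : Prop :=
  (∀ f : G → R, (∀ g, f g ∈ Jset gpd β g) → (∀ g, g ∉ H → f g = 0) → (∑ g, f g) ∈ V) ∧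
    ∀ v ∈ V, ∃! f : G → R,
      (∀ g, f g ∈ Jset gpd β g) ∧ (∀ g, g ∉ H → f g = 0) ∧ v = ∑ g, f g

/-- `γ(H) = ⊕_{h ∈ H} J_h`, as the set of all sums `Σ_{h ∈ H} j_h`, `j_h ∈ J_h`. -/
def gammaSet [Fintype G] (H : Set G) : Set R :=
  {v : R | ∃ f : G → R,
    (∀ g, f g ∈ Jset gpd β g) ∧ (∀ g, g ∉ H → f g = 0) ∧ v = ∑ g, f g}

/-- The product `J_h J_g`: all finite sums of products `a b` with `a ∈ J_h`, `b ∈ J_g`. -/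
def JprodSet (h g : G) : Set R :=
  {z : R | ∃ (n : ℕ) (a b : Fin n → R),
    (∀ i, a i ∈ Jset gpd β h) ∧ (∀ i, b i ∈ Jset gpd β g) ∧ z = ∑ i, a i * b i}

end Defs

section Sep

variable {R : Type u} [Ring R]

/-- A biadditive pairing `φ : R × R → N` is `S`-balanced if `φ(u s, v) = φ(u, s v)`
for all `s ∈ S`.  Such pairings are exactly the additive maps out of `R ⊗_S R`,
so they detect equality in `R ⊗_S R`. -/
def IsBalanced (S : Set R) {N : Type v} [AddCommGroup N] (φ : R →+ R →+ N) : Prop :=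
  ∀ u v s : R, s ∈ S → φ (u * s) v = φ u (s * v)

/-- `R` is a separable extension of the subring `S ⊆ R`: there is
`z = Σ_i x_i ⊗ y_i ∈ R ⊗_S R` with `Σ_i x_i y_i = 1` and `a z = z a` for all `a ∈ R`
(the latter expressed via all `S`-balanced pairings, which detect equality in
`R ⊗_S R`). -/
def RSepOver (S : Set R) : Prop :=
  ∃ (n : ℕ) (x y : Fin n → R), (∑ i, x i * y i) = 1 ∧
    ∀ (N : Type v) [AddCommGroup N] (φ : R →+ R →+ N), IsBalanced S φ →
      ∀ a : R, (∑ i, φ (a * x i) (y i)) = ∑ i, φ (x i) (y i * a)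

/-- `R` is a Hirata separable extension of `S`: `R ⊗_S R` is isomorphic as an
`R`-bimodule to a direct summand of a finite direct sum of copies of `R`.
Equivalently (Casimir elements): there are `R`-central elements
`e_k = Σ_i x_{k,i} ⊗ y_{k,i} ∈ (R ⊗_S R)^R` and `a_k ∈ V_R(S)` with
`Σ_k a_k e_k = 1 ⊗ 1` (centrality and the last equation expressed via all
`S`-balanced pairings, which detect equality in `R ⊗_S R`). -/
def HirataSep (S : Set R) : Prop :=
  ∃ (n m : ℕ) (x y : Fin n → Fin m → R) (a : Fin n → R),
    (∀ k, a k ∈ Set.centralizer S) ∧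
    ∀ (N : Type v) [AddCommGroup N] (φ : R →+ R →+ N), IsBalanced S φ →
      (∀ (k : Fin n) (r : R),
        (∑ i, φ (r * x k i) (y k i)) = ∑ i, φ (x k i) (y k i * r)) ∧
      (∑ k, ∑ i, φ (a k * x k i) (y k i)) = φ 1 1

/-- The subring `A` of `R` is a separable extension of the subring `S ⊆ A`:
there is `z = Σ_i x_i ⊗ y_i ∈ A ⊗_S A` with `Σ_i x_i y_i = 1` and `a z = z a`
for all `a ∈ A`. -/
def SubSepOver (A : Subring R) (S : Set R) : Prop :=
  ∃ (n : ℕ) (x y : Fin n → A), (∑ i, (x i : R) * (y i : R)) = 1 ∧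
    ∀ (N : Type v) [AddCommGroup N] (φ : A →+ A →+ N),
      (∀ u v s : A, (s : R) ∈ S → φ (u * s) v = φ u (s * v)) →
      ∀ a : A, (∑ i, φ (a * x i) (y i)) = ∑ i, φ (x i) (y i * a)

end Sep

/-- `R` satisfies the fundamental theorem: the Galois map `θ : H ↦ R^{β_H}` is a
bijection from the set of wide subgroupoids of `G` onto the set of subalgebras of
`R` which are separable over `R^β`. -/
def SatisfiesFT {K : Type*} [CommRing K] {R : Type u} [Ring R] [Algebra K R]
    {G : Type*} [Fintype G] (gpd : Gpd G) (β : GpdAct K R gpd) : Prop :=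
  (∀ H : Set G, gpd.IsWide H → ∃ A : Subring R, (A : Set R) = fixedSet gpd β H ∧
      fixedSet gpd β Set.univ ⊆ (A : Set R) ∧
      SubSepOver.{u, v} A (fixedSet gpd β Set.univ)) ∧
  (∀ H L : Set G, gpd.IsWide H → gpd.IsWide L →
      fixedSet gpd β H = fixedSet gpd β L → H = L) ∧
  (∀ A : Subring R, fixedSet gpd β Set.univ ⊆ (A : Set R) →
      SubSepOver.{u, v} A (fixedSet gpd β Set.univ) →
      ∃ H : Set G, gpd.IsWide H ∧ fixedSet gpd β H = (A : Set R))


namespace GalAux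

lemma shuffle {R : Type*} [Ring R] {a b c d : R} (hbc : c * b = b * c) :
    a * b * (c * d) = a * c * (b * d) := by
  rw [mul_assoc a b (c * d), ← mul_assoc b c d, ← hbc, mul_assoc c b d, ← mul_assoc a c (b * d)]

variable {K : Type*} [CommRing K] {R : Type*} [Ring R] [Algebra K R]
  {G : Type*} [Fintype G] (gpd : Gpd G) (β : GpdAct K R gpd)

lemma d_mem (g : G) : gpd.d g ∈ gpd.idts := ⟨g, rfl⟩

lemma r_mem (g : G) : gpd.r g ∈ gpd.idts := ⟨gpd.inv g, gpd.d_inv g⟩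

lemma idts_d {e : G} (he : e ∈ gpd.idts) : gpd.d e = e := by
  obtain ⟨m, rfl⟩ := he; exact gpd.d_d m

lemma idts_r {e : G} (he : e ∈ gpd.idts) : gpd.r e = e := by
  obtain ⟨m, rfl⟩ := he; exact gpd.r_d m

lemma idts_inv {e : G} (he : e ∈ gpd.idts) : gpd.inv e = e := by
  obtain ⟨m, rfl⟩ := he; exact gpd.inv_d m

lemma inv_mem_iff {h : G} : gpd.inv h ∈ gpd.idts ↔ h ∈ gpd.idts := by
  constructor
  · intro hh
    have h1 : gpd.inv (gpd.inv h) = gpd.inv h := idts_inv gpd hh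
    rw [gpd.inv_inv] at h1
    rw [h1]; exact hh
  · intro hh; rw [idts_inv gpd hh]; exact hh

lemma one_inv (g : G) : β.one (gpd.inv g) = β.one (gpd.d g) := by
  rw [β.one_r (gpd.inv g), gpd.r_inv]

lemma act_zero (g : G) : β.act g (0 * β.one (gpd.inv g)) = 0 := by
  have h := β.act_add g 0 0
  rw [add_zero] at h
  exact left_eq_add.mp h

lemma act_zero' (g : G) {u : R} (hu : u * β.one (gpd.inv g) = 0) :
    β.act g (u * β.one (gpd.inv g)) = 0 := by
  have h0 : u * β.one (gpd.inv g) = 0 * β.one (gpd.inv g) := by rw [hu, zero_mul]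
  rw [h0, act_zero]

lemma act_sum {ι : Type*} (g : G) (s : Finset ι) (u : ι → R) :
    β.act g ((∑ i ∈ s, u i) * β.one (gpd.inv g)) =
      ∑ i ∈ s, β.act g (u i * β.one (gpd.inv g)) := by
  classical
  induction s using Finset.induction_on with
  | empty => simpa using act_zero gpd β g
  | insert _ _ hnot ih => rw [Finset.sum_insert hnot, Finset.sum_insert hnot, β.act_add, ih]

lemma act_idts {e : G} (he : e ∈ gpd.idts) (x : R) :
    β.act e (x * β.one e) = x * β.one e := by
  have h1 := β.act_id e x
  rwa [idts_d gpd he] at h1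

lemma act_orth (hdec : IsDecomp gpd β) (g : G) {e : G} (he : e ∈ gpd.idts)
    (hne : gpd.r g ≠ e) (x : R) :
    β.act g (x * β.one (gpd.inv g)) * β.one e = 0 := by
  rw [← β.act_mem g x, mul_assoc, β.one_r g, hdec.2 (gpd.r g) e (r_mem gpd g) he hne, mul_zero]

/-- The trace map. -/
def tr (r : R) : R := ∑ h : G, β.act h (r * β.one (gpd.inv h))

lemma tr_fixed (hdec : IsDecomp gpd β) (r : R) (g : G) :
    β.act g (tr gpd β r * β.one (gpd.inv g)) = tr gpd β r * β.one g := by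
  have hL : ∀ h : G, β.act g (β.act h (r * β.one (gpd.inv h)) * β.one (gpd.inv g)) =
      if gpd.r h = gpd.d g then β.act (gpd.mul g h) (r * β.one (gpd.inv (gpd.mul g h)))
      else 0 := by
    intro h
    by_cases hc : gpd.r h = gpd.d g
    · rw [if_pos hc, β.act_comp g h r hc.symm]
      congr 2
      rw [one_inv gpd β h, one_inv gpd β (gpd.mul g h), gpd.d_mul g h hc.symm]
    · rw [if_neg hc]
      refine act_zero' gpd β g ?_
      rw [one_inv gpd β g]
      exact act_orth gpd β hdec h (d_mem gpd g) hc r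
  have hR : ∀ k : G, β.act k (r * β.one (gpd.inv k)) * β.one g =
      if gpd.r k = gpd.r g then β.act k (r * β.one (gpd.inv k)) else 0 := by
    intro k
    by_cases hc : gpd.r k = gpd.r g
    · rw [if_pos hc, β.one_r g, ← hc, ← β.one_r k, β.act_mem]
    · rw [if_neg hc, β.one_r g]
      exact act_orth gpd β hdec k (r_mem gpd g) hc r
  calc β.act g (tr gpd β r * β.one (gpd.inv g))
      = ∑ h : G, β.act g (β.act h (r * β.one (gpd.inv h)) * β.one (gpd.inv g)) := by
        unfold tr; exact act_sum gpd β g Finset.univ _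
    _ = ∑ h : G, if gpd.r h = gpd.d g then
          β.act (gpd.mul g h) (r * β.one (gpd.inv (gpd.mul g h))) else 0 :=
        Finset.sum_congr rfl fun h _ => hL h
    _ = ∑ h ∈ Finset.univ.filter (fun h => gpd.r h = gpd.d g),
          β.act (gpd.mul g h) (r * β.one (gpd.inv (gpd.mul g h))) :=
        (Finset.sum_filter _ _).symm
    _ = ∑ k ∈ Finset.univ.filter (fun k => gpd.r k = gpd.r g),
          β.act k (r * β.one (gpd.inv k)) := by
        refine Finset.sum_nbij' (fun h => gpd.mul g h) (fun k => gpd.mul (gpd.inv g) k)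
          ?_ ?_ ?_ ?_ ?_
        · intro h hh
          simp only [Finset.mem_filter, Finset.mem_univ, true_and] at hh ⊢
          rw [gpd.r_mul g h hh.symm]
        · intro k hk
          simp only [Finset.mem_filter, Finset.mem_univ, true_and] at hk ⊢
          rw [gpd.r_mul (gpd.inv g) k ((gpd.d_inv g).trans hk.symm), gpd.r_inv]
        · intro h hh
          simp only [Finset.mem_filter, Finset.mem_univ, true_and] at hh
          show gpd.mul (gpd.inv g) (gpd.mul g h) = h
          rw [← gpd.assoc (gpd.inv g) g h (gpd.d_inv g) hh.symm, gpd.inv_mul, ← hh]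
          exact gpd.r_mul_self h
        · intro k hk
          simp only [Finset.mem_filter, Finset.mem_univ, true_and] at hk
          show gpd.mul g (gpd.mul (gpd.inv g) k) = k
          rw [← gpd.assoc g (gpd.inv g) k (gpd.r_inv g).symm ((gpd.d_inv g).trans hk.symm),
            gpd.mul_inv, ← hk]
          exact gpd.r_mul_self k
        · intro h _
          rfl
    _ = ∑ k : G, if gpd.r k = gpd.r g then β.act k (r * β.one (gpd.inv k)) else 0 :=
        Finset.sum_filter _ _
    _ = ∑ k : G, β.act k (r * β.one (gpd.inv k)) * β.one g :=
        (Finset.sum_congr rfl fun k _ => hR k).symm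
    _ = tr gpd β r * β.one g := by
        unfold tr; rw [Finset.sum_mul]

lemma sum_one_mul (hdec : IsDecomp gpd β) (a : R) :
    (∑ h : G, if h ∈ gpd.idts then a * β.one h else 0) = a := by
  have h1 : ∀ h : G, (if h ∈ gpd.idts then a * β.one h else 0) =
      a * (if h ∈ gpd.idts then β.one h else 0) := fun h => by
    rw [mul_ite, mul_zero]
  rw [show (∑ h : G, if h ∈ gpd.idts then a * β.one h else 0) =
      ∑ h : G, a * (if h ∈ gpd.idts then β.one h else 0) from
      Finset.sum_congr rfl fun h _ => h1 h,
    ← Finset.mul_sum, hdec.1, mul_one]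

lemma ldual {n : ℕ} (x y : Fin n → R)
    (hx : ∀ g : G, (∑ i, x i * β.act g (y i * β.one (gpd.inv g))) =
      if g ∈ gpd.idts then β.one g else 0)
    (hdec : IsDecomp gpd β) (a : R) :
    (∑ i, x i * tr gpd β (y i * a)) = a := by
  calc (∑ i, x i * tr gpd β (y i * a))
      = ∑ i, ∑ h : G,
          x i * (β.act h (y i * β.one (gpd.inv h)) * β.act h (a * β.one (gpd.inv h))) := by
        refine Finset.sum_congr rfl fun i _ => ?_
        unfold tr
        rw [Finset.mul_sum]
        exact Finset.sum_congr rfl fun h _ => by rw [β.act_mul h (y i) a]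
    _ = ∑ h : G, (∑ i, x i * β.act h (y i * β.one (gpd.inv h))) *
          β.act h (a * β.one (gpd.inv h)) := by
        rw [Finset.sum_comm]
        refine Finset.sum_congr rfl fun h _ => ?_
        rw [Finset.sum_mul]
        exact Finset.sum_congr rfl fun i _ => (mul_assoc _ _ _).symm
    _ = ∑ h : G, (if h ∈ gpd.idts then β.one h else 0) * β.act h (a * β.one (gpd.inv h)) :=
        Finset.sum_congr rfl fun h _ => by rw [hx h]
    _ = ∑ h : G, if h ∈ gpd.idts then a * β.one h else 0 := by
        refine Finset.sum_congr rfl fun h _ => ?_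
        by_cases hh : h ∈ gpd.idts
        · rw [if_pos hh, if_pos hh, idts_inv gpd hh, act_idts gpd β hh a,
            β.one_central h (a * β.one h), mul_assoc, β.one_idem]
        · rw [if_neg hh, if_neg hh, zero_mul]
    _ = a := sum_one_mul gpd β hdec a

lemma flip {n : ℕ} (x y : Fin n → R)
    (hx : ∀ g : G, (∑ i, x i * β.act g (y i * β.one (gpd.inv g))) =
      if g ∈ gpd.idts then β.one g else 0)
    (h : G) :
    (∑ i, β.act h (x i * β.one (gpd.inv h)) * y i) =
      if h ∈ gpd.idts then β.one h else 0 := by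
  have hcomp : gpd.d h = gpd.r (gpd.inv h) := (gpd.r_inv h).symm
  have hg := hx (gpd.inv h)
  rw [gpd.inv_inv h] at hg
  have h2 : β.act h ((∑ i, x i * β.act (gpd.inv h) (y i * β.one h)) * β.one (gpd.inv h)) =
      β.act h ((if gpd.inv h ∈ gpd.idts then β.one (gpd.inv h) else 0) * β.one (gpd.inv h)) := by
    rw [hg]
  rw [act_sum gpd β h Finset.univ _] at h2
  have hterm : ∀ i, β.act h (x i * β.act (gpd.inv h) (y i * β.one h) * β.one (gpd.inv h)) =
      β.act h (x i * β.one (gpd.inv h)) * y i := by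
    intro i
    rw [β.act_mul h (x i) (β.act (gpd.inv h) (y i * β.one h))]
    have h3 := β.act_comp h (gpd.inv h) (y i) hcomp
    rw [gpd.inv_inv h] at h3
    rw [gpd.mul_inv h] at h3
    have h4 : β.act (gpd.r h) (y i * β.one h) = y i * β.one h := by
      rw [β.one_r h]
      exact act_idts gpd β (r_mem gpd h) (y i)
    rw [h3, h4, ← β.one_central h (y i), ← mul_assoc, β.act_mem]
  rw [show (∑ i, β.act h (x i * β.act (gpd.inv h) (y i * β.one h) * β.one (gpd.inv h))) =
      ∑ i, β.act h (x i * β.one (gpd.inv h)) * y i from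
      Finset.sum_congr rfl fun i _ => hterm i] at h2
  rw [h2]
  by_cases hh : h ∈ gpd.idts
  · rw [if_pos ((inv_mem_iff gpd).mpr hh), if_pos hh, β.one_idem, β.act_unit]
  · rw [if_neg (fun hc => hh ((inv_mem_iff gpd).mp hc)), if_neg hh]
    exact act_zero gpd β h

lemma rdual {n : ℕ} (x y : Fin n → R)
    (hx : ∀ g : G, (∑ i, x i * β.act g (y i * β.one (gpd.inv g))) =
      if g ∈ gpd.idts then β.one g else 0)
    (hdec : IsDecomp gpd β) (a : R) :
    (∑ i, tr gpd β (a * x i) * y i) = a := by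
  calc (∑ i, tr gpd β (a * x i) * y i)
      = ∑ i, ∑ h : G,
          β.act h (a * β.one (gpd.inv h)) * (β.act h (x i * β.one (gpd.inv h)) * y i) := by
        refine Finset.sum_congr rfl fun i _ => ?_
        unfold tr
        rw [Finset.sum_mul]
        exact Finset.sum_congr rfl fun h _ => by rw [β.act_mul h a (x i), mul_assoc]
    _ = ∑ h : G, β.act h (a * β.one (gpd.inv h)) *
          (∑ i, β.act h (x i * β.one (gpd.inv h)) * y i) := by
        rw [Finset.sum_comm]
        exact Finset.sum_congr rfl fun h _ => (Finset.mul_sum _ _ _).symm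
    _ = ∑ h : G, β.act h (a * β.one (gpd.inv h)) * (if h ∈ gpd.idts then β.one h else 0) :=
        Finset.sum_congr rfl fun h _ => by rw [flip gpd β x y hx h]
    _ = ∑ h : G, if h ∈ gpd.idts then a * β.one h else 0 := by
        refine Finset.sum_congr rfl fun h _ => ?_
        by_cases hh : h ∈ gpd.idts
        · rw [if_pos hh, if_pos hh, idts_inv gpd hh, act_idts gpd β hh a, mul_assoc, β.one_idem]
        · rw [if_neg hh, if_neg hh, mul_zero]
    _ = a := sum_one_mul gpd β hdec a

lemma proj {n : ℕ} (x y : Fin n → R)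
    (hx : ∀ g : G, (∑ i, x i * β.act g (y i * β.one (gpd.inv g))) =
      if g ∈ gpd.idts then β.one g else 0)
    (hdec : IsDecomp gpd β) (h g : G) {t : R} (ht : t ∈ Jset gpd β h) :
    (∑ i, x i * t * β.act g (y i * β.one (gpd.inv g))) = if g = h then t else 0 := by
  obtain ⟨ht1, ht2⟩ := ht
  by_cases hr : gpd.r g = gpd.r h
  · have hc1 : gpd.d (gpd.inv h) = gpd.r g := (gpd.d_inv h).trans hr.symm
    have hrk : gpd.r (gpd.mul (gpd.inv h) g) = gpd.d h :=
      (gpd.r_mul (gpd.inv h) g hc1).trans (gpd.r_inv h)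
    have hdk : gpd.d (gpd.mul (gpd.inv h) g) = gpd.d g := gpd.d_mul (gpd.inv h) g hc1
    have hmul : gpd.mul h (gpd.mul (gpd.inv h) g) = g := by
      rw [← gpd.assoc h (gpd.inv h) g (gpd.r_inv h).symm hc1, gpd.mul_inv h, ← hr]
      exact gpd.r_mul_self g
    have honek : β.one (gpd.inv g) = β.one (gpd.inv (gpd.mul (gpd.inv h) g)) := by
      rw [one_inv gpd β g, one_inv gpd β (gpd.mul (gpd.inv h) g), hdk]
    have hkey : ∀ i : Fin n, t * β.act g (y i * β.one (gpd.inv g)) =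
        β.act (gpd.mul (gpd.inv h) g) (y i * β.one (gpd.inv (gpd.mul (gpd.inv h) g))) * t := by
      intro i
      have hA := β.act_comp h (gpd.mul (gpd.inv h) g) (y i) hrk.symm
      rw [hmul] at hA
      rw [honek, ← hA]
      exact ht2 _
    have hsum : (∑ i, x i * t * β.act g (y i * β.one (gpd.inv g))) =
        (if gpd.mul (gpd.inv h) g ∈ gpd.idts then β.one (gpd.mul (gpd.inv h) g) else 0) * t := by
      rw [← hx (gpd.mul (gpd.inv h) g), Finset.sum_mul]
      refine Finset.sum_congr rfl fun i _ => ?_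
      rw [mul_assoc, hkey i, ← mul_assoc]
    by_cases hgh : g = h
    · rw [if_pos hgh, hsum]
      subst hgh
      rw [gpd.inv_mul g, if_pos (d_mem gpd g)]
      have e1 := ht2 (β.one (gpd.inv g))
      rw [β.one_idem, β.act_unit, ht1] at e1
      rw [one_inv gpd β g] at e1
      exact e1.symm
    · have hnk : gpd.mul (gpd.inv h) g ∉ gpd.idts := by
        intro hk
        apply hgh
        have h2 : gpd.r (gpd.mul (gpd.inv h) g) = gpd.mul (gpd.inv h) g := idts_r gpd hk
        rw [hrk] at h2
        have h3 := hmul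
        rw [← h2, gpd.mul_d h] at h3
        exact h3.symm
      rw [if_neg hgh, hsum, if_neg hnk, zero_mul]
  · have hne : gpd.r h ≠ gpd.r g := fun e => hr e.symm
    have hgh : g ≠ h := fun e => hr (by rw [e])
    rw [if_neg hgh]
    have hzero : ∀ i : Fin n, x i * t * β.act g (y i * β.one (gpd.inv g)) = 0 := by
      intro i
      have hA : β.one g * β.act g (y i * β.one (gpd.inv g)) =
          β.act g (y i * β.one (gpd.inv g)) :=
        (β.one_central g _).trans (β.act_mem g (y i))
      have hOne : β.one h * β.act g (y i * β.one (gpd.inv g)) = 0 := by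
        rw [← hA, ← mul_assoc, β.one_r h, β.one_r g,
          hdec.2 (gpd.r h) (gpd.r g) (r_mem gpd h) (r_mem gpd g) hne, zero_mul]
      rw [mul_assoc, ← ht1, mul_assoc t, hOne, mul_zero, mul_zero]
    exact (Finset.sum_congr rfl fun i _ => hzero i).trans Finset.sum_const_zero

lemma J_comm {g : G} {t : R} (ht : t ∈ Jset gpd β g) {s : R}
    (hs : s ∈ fixedSet gpd β Set.univ) : s * t = t * s := by
  obtain ⟨ht1, ht2⟩ := ht
  have h1 := ht2 s
  rw [hs g (Set.mem_univ g), ← β.one_central g s, ← mul_assoc, ht1] at h1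
  exact h1.symm

lemma main_mem {n : ℕ} (x y : Fin n → R)
    (hx : ∀ g : G, (∑ i, x i * β.act g (y i * β.one (gpd.inv g))) =
      if g ∈ gpd.idts then β.one g else 0)
    (hdec : IsDecomp gpd β)
    {v : R} (hv : v ∈ Set.centralizer (fixedSet gpd β Set.univ)) (g : G) :
    (∑ i, x i * v * β.act g (y i * β.one (gpd.inv g))) ∈ Jset gpd β g := by
  have hv' : ∀ m ∈ fixedSet gpd β Set.univ, m * v = v * m := hv
  have htr : ∀ b : R, tr gpd β b ∈ fixedSet gpd β Set.univ :=
    fun b h _ => tr_fixed gpd β hdec b h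
  have honeA : ∀ j : Fin n, β.one g * β.act g (y j * β.one (gpd.inv g)) =
      β.act g (y j * β.one (gpd.inv g)) :=
    fun j => (β.one_central g _).trans (β.act_mem g (y j))
  refine ⟨?_, ?_⟩
  · rw [Finset.sum_mul]
    exact Finset.sum_congr rfl fun i _ => by rw [mul_assoc, β.act_mem]
  · intro a
    have step : ∀ i : Fin n, x i * v * β.act g (y i * a * β.one (gpd.inv g)) =
        ∑ j, x i * tr gpd β (y i * (a * x j)) * (v * β.act g (y j * β.one (gpd.inv g))) := by
      intro i
      rw [show y i * a = ∑ j, tr gpd β (y i * a * x j) * y j from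
        (rdual gpd β x y hx hdec (y i * a)).symm]
      rw [act_sum gpd β g Finset.univ _, Finset.mul_sum]
      refine Finset.sum_congr rfl fun j _ => ?_
      rw [β.act_mul g (tr gpd β (y i * a * x j)) (y j),
        tr_fixed gpd β hdec (y i * a * x j) g,
        mul_assoc (tr gpd β (y i * a * x j)) (β.one g), honeA j,
        mul_assoc (y i) a (x j)]
      exact shuffle (hv' _ (htr (y i * (a * x j))))
    calc (∑ i, x i * v * β.act g (y i * β.one (gpd.inv g))) * β.act g (a * β.one (gpd.inv g))
        = ∑ i, x i * v * β.act g (y i * a * β.one (gpd.inv g)) := by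
          rw [Finset.sum_mul]
          refine Finset.sum_congr rfl fun i _ => ?_
          rw [mul_assoc, ← β.act_mul g (y i) a]
      _ = ∑ i, ∑ j, x i * tr gpd β (y i * (a * x j)) *
            (v * β.act g (y j * β.one (gpd.inv g))) :=
          Finset.sum_congr rfl fun i _ => step i
      _ = ∑ j, (∑ i, x i * tr gpd β (y i * (a * x j))) *
            (v * β.act g (y j * β.one (gpd.inv g))) := by
          rw [Finset.sum_comm]
          exact Finset.sum_congr rfl fun j _ => (Finset.sum_mul _ _ _).symm
      _ = ∑ j, a * x j * (v * β.act g (y j * β.one (gpd.inv g))) :=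
          Finset.sum_congr rfl fun j _ => by rw [ldual gpd β x y hx hdec (a * x j)]
      _ = a * ∑ j, x j * v * β.act g (y j * β.one (gpd.inv g)) := by
          rw [Finset.mul_sum]
          refine Finset.sum_congr rfl fun j _ => ?_
          rw [mul_assoc a (x j), ← mul_assoc (x j) v]

lemma main_sum {n : ℕ} (x y : Fin n → R)
    (hx : ∀ g : G, (∑ i, x i * β.act g (y i * β.one (gpd.inv g))) =
      if g ∈ gpd.idts then β.one g else 0)
    (hdec : IsDecomp gpd β)
    {v : R} (hv : v ∈ Set.centralizer (fixedSet gpd β Set.univ)) :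
    (∑ g : G, ∑ i, x i * v * β.act g (y i * β.one (gpd.inv g))) = v := by
  have hv' : ∀ m ∈ fixedSet gpd β Set.univ, m * v = v * m := hv
  have htr : ∀ b : R, tr gpd β b ∈ fixedSet gpd β Set.univ :=
    fun b h _ => tr_fixed gpd β hdec b h
  have hl : (∑ i, x i * tr gpd β (y i)) = 1 := by
    have h1 := ldual gpd β x y hx hdec 1
    calc (∑ i, x i * tr gpd β (y i))
        = ∑ i, x i * tr gpd β (y i * 1) :=
          Finset.sum_congr rfl fun i _ => by rw [mul_one]
      _ = 1 := h1
  calc (∑ g : G, ∑ i, x i * v * β.act g (y i * β.one (gpd.inv g)))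
      = ∑ i, ∑ g : G, x i * v * β.act g (y i * β.one (gpd.inv g)) := Finset.sum_comm
    _ = ∑ i, x i * tr gpd β (y i) * v := by
        refine Finset.sum_congr rfl fun i _ => ?_
        have hT : (∑ g : G, β.act g (y i * β.one (gpd.inv g))) = tr gpd β (y i) := rfl
        rw [← Finset.mul_sum, hT, mul_assoc, ← hv' _ (htr (y i)), ← mul_assoc]
    _ = (∑ i, x i * tr gpd β (y i)) * v := (Finset.sum_mul _ _ _).symm
    _ = v := by rw [hl, one_mul]

end GalAux

/-- Lemma 3.1: `V_R(R^β) = ⊕_{g ∈ G} J_g`. -/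
theorem commutant_eq_directSum_Jset {K : Type*} [CommRing K] {R : Type*} [Ring R]
    [Algebra K R] {G : Type*} [Fintype G] [Nonempty G]
    (gpd : Gpd G) (β : GpdAct K R gpd)
    (hdec : IsDecomp gpd β) (hgal : IsGaloisExt gpd β) :
    IsDirectSumOver gpd β Set.univ (Set.centralizer (fixedSet gpd β Set.univ)) := by
  obtain ⟨n, x, y, hx⟩ := hgal
  refine ⟨?_, ?_⟩
  · intro f hf _
    intro m hm
    calc m * ∑ g, f g = ∑ g, m * f g := Finset.mul_sum _ _ _
      _ = ∑ g, f g * m := Finset.sum_congr rfl fun g _ => GalAux.J_comm gpd β (hf g) hm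
      _ = (∑ g, f g) * m := (Finset.sum_mul _ _ _).symm
  · intro v hv
    refine ⟨fun g => ∑ i, x i * v * β.act g (y i * β.one (gpd.inv g)),
      ⟨fun g => GalAux.main_mem gpd β x y hx hdec hv g,
       fun g hg => absurd (Set.mem_univ g) hg,
       (GalAux.main_sum gpd β x y hx hdec hv).symm⟩, ?_⟩
    intro f hf
    obtain ⟨hfJ, -, hfsum⟩ := hf
    funext g
    show f g = ∑ i, x i * v * β.act g (y i * β.one (gpd.inv g))
    have key : f g = ∑ i, x i * (∑ h, f h) * β.act g (y i * β.one (gpd.inv g)) := by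
      have hsingle : (∑ h : G, if g = h then f h else 0) = f g := by
        rw [Finset.sum_eq_single g (fun b _ hb => if_neg fun e => hb e.symm)
          (fun hg => absurd (Finset.mem_univ g) hg), if_pos rfl]
      calc f g = ∑ h : G, if g = h then f h else 0 := hsingle.symm
        _ = ∑ h : G, ∑ i, x i * f h * β.act g (y i * β.one (gpd.inv g)) :=
          Finset.sum_congr rfl fun h _ => (GalAux.proj gpd β x y hx hdec h g (hfJ h)).symm
        _ = ∑ i, ∑ h : G, x i * f h * β.act g (y i * β.one (gpd.inv g)) := Finset.sum_comm
        _ = ∑ i, x i * (∑ h, f h) * β.act g (y i * β.one (gpd.inv g)) := by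
          refine Finset.sum_congr rfl fun i _ => ?_
          rw [Finset.mul_sum, Finset.sum_mul]
    rw [key, ← hfsum]
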